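/- arXiv:1310.4993 — 4 statements merged into one kernel-verified Lean document; each statement's English description precedes it below -/
import Mathlib

section
/- Let M ≥ 2 and let H_{i,j} for i, j ∈ {1,2,3} with i ≠ j be invertible M×M complex matrices. Set T = H₂₃⁻¹H₂₁H₃₁⁻¹H₃₂H₁₂⁻¹H₁₃. Let Q₃ be an M×(M−1) complex matrix each of whose columns is an eigenvector of T (for each column q there is λ ∈ ℂ with T q = λ q), and define Q₁ = H₂₁⁻¹H₂₃Q₃ and Q₂ = H₁₂⁻¹H₁₃Q₃. Then the interference at every receiver is confined to at most M−1 dimensions: rank[H₁₂Q₂ | H₁₃Q₃] ≤ M−1, rank[H₂₁Q₁ | H₂₃Q₃] ≤ M−1, and rank[H₃₁Q₁ | H₃₂Q₂] ≤ M−1. -/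
open Matrix

/-- FIA alignment for the 3-user MIMO IC: with precoders of dimension `M × (M-1)`
built from `M-1` eigenvectors of `T = H₂₃⁻¹H₂₁H₃₁⁻¹H₃₂H₁₂⁻¹H₁₃`, the interference
at every receiver is confined to at most `M-1` dimensions. -/
theorem fia_3user_mimo_alignment {M : ℕ} (hM : 2 ≤ M)
    (H12 H13 H21 H23 H31 H32 : Matrix (Fin M) (Fin M) ℂ)
    (h12 : IsUnit H12) (h13 : IsUnit H13) (h21 : IsUnit H21)
    (h23 : IsUnit H23) (h31 : IsUnit H31) (h32 : IsUnit H32)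
    (Q3 : Matrix (Fin M) (Fin (M - 1)) ℂ)
    (hQ3 : ∀ c : Fin (M - 1), ∃ lam : ℂ,
      (H23⁻¹ * H21 * H31⁻¹ * H32 * H12⁻¹ * H13) *ᵥ (fun r => Q3 r c) =
        lam • (fun r => Q3 r c))
    (Q1 Q2 : Matrix (Fin M) (Fin (M - 1)) ℂ)
    (hQ1 : Q1 = H21⁻¹ * H23 * Q3) (hQ2 : Q2 = H12⁻¹ * H13 * Q3) :
    (fromCols (H12 * Q2) (H13 * Q3)).rank ≤ M - 1 ∧
    (fromCols (H21 * Q1) (H23 * Q3)).rank ≤ M - 1 ∧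
    (fromCols (H31 * Q1) (H32 * Q2)).rank ≤ M - 1 := by
  have d12 := (Matrix.isUnit_iff_isUnit_det H12).1 h12
  have d13 := (Matrix.isUnit_iff_isUnit_det H13).1 h13
  have d21 := (Matrix.isUnit_iff_isUnit_det H21).1 h21
  have d23 := (Matrix.isUnit_iff_isUnit_det H23).1 h23
  have d31 := (Matrix.isUnit_iff_isUnit_det H31).1 h31
  have d32 := (Matrix.isUnit_iff_isUnit_det H32).1 h32
  have e12 : H12 * Q2 = H13 * Q3 := by
    rw [hQ2, ← Matrix.mul_assoc, ← Matrix.mul_assoc,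
      Matrix.mul_nonsing_inv _ d12, Matrix.one_mul]
  have e21 : H21 * Q1 = H23 * Q3 := by
    rw [hQ1, ← Matrix.mul_assoc, ← Matrix.mul_assoc,
      Matrix.mul_nonsing_inv _ d21, Matrix.one_mul]
  -- a generic bound: rank of [A | A*D] ≤ M - 1
  have width : Fintype.card (Fin (M - 1) ⊕ Fin (M - 1)) = (M - 1) + (M - 1) := by simp
  have bound : ∀ (A : Matrix (Fin M) (Fin (M - 1)) ℂ)
      (D : Matrix (Fin (M - 1)) (Fin (M - 1)) ℂ),
      (fromCols A (A * D)).rank ≤ M - 1 := by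
    intro A D
    have h : fromCols A (A * D) = A * fromCols 1 D := by
      rw [Matrix.mul_fromCols, Matrix.mul_one]
    rw [h]
    calc (A * fromCols 1 D).rank ≤ A.rank := Matrix.rank_mul_le_left _ _
      _ ≤ Fintype.card (Fin (M - 1)) := Matrix.rank_le_card_width _
      _ = M - 1 := by simp
  refine ⟨?_, ?_, ?_⟩
  · have h1 : fromCols (H12 * Q2) (H13 * Q3)
        = fromCols (H13 * Q3) ((H13 * Q3) * (1 : Matrix (Fin (M-1)) (Fin (M-1)) ℂ)) := by
      rw [e12, Matrix.mul_one]
    rw [h1]; exact bound _ _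
  · have h1 : fromCols (H21 * Q1) (H23 * Q3)
        = fromCols (H23 * Q3) ((H23 * Q3) * (1 : Matrix (Fin (M-1)) (Fin (M-1)) ℂ)) := by
      rw [e21, Matrix.mul_one]
    rw [h1]; exact bound _ _
  · -- eigenvalue relation: H32 * Q2 = (H31 * Q1) * diagonal lam
    set lam : Fin (M - 1) → ℂ := fun c => Classical.choose (hQ3 c) with hlam
    have key : H32 * Q2 = (H31 * Q1) * Matrix.diagonal lam := by
      ext r c
      have hc := Classical.choose_spec (hQ3 c)
      -- apply (H31 * H21⁻¹ * H23) to both sides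
      have happ := congrArg (fun v => (H31 * H21⁻¹ * H23) *ᵥ v) hc
      simp only [Matrix.mulVec_mulVec, Matrix.mulVec_smul] at happ
      have hsimp : H31 * H21⁻¹ * H23 * (H23⁻¹ * H21 * H31⁻¹ * H32 * H12⁻¹ * H13)
          = H32 * H12⁻¹ * H13 := by
        rw [show H31 * H21⁻¹ * H23 * (H23⁻¹ * H21 * H31⁻¹ * H32 * H12⁻¹ * H13)
            = H31 * H21⁻¹ * (H23 * H23⁻¹) * H21 * H31⁻¹ * H32 * H12⁻¹ * H13 by
          simp only [Matrix.mul_assoc],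
          Matrix.mul_nonsing_inv _ d23, Matrix.mul_one,
          show H31 * H21⁻¹ * H21 * H31⁻¹ * H32 * H12⁻¹ * H13
            = H31 * (H21⁻¹ * H21) * H31⁻¹ * H32 * H12⁻¹ * H13 by
          simp only [Matrix.mul_assoc],
          Matrix.nonsing_inv_mul _ d21, Matrix.mul_one,
          Matrix.mul_nonsing_inv _ d31, Matrix.one_mul]
      rw [hsimp] at happ
      have hm2 : H32 * Q2 = (H32 * H12⁻¹ * H13) * Q3 := by
        rw [hQ2]; simp only [Matrix.mul_assoc]
      have hm1 : H31 * Q1 = (H31 * H21⁻¹ * H23) * Q3 := by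
        rw [hQ1]; simp only [Matrix.mul_assoc]
      have hQ2col : ∀ r, (H32 * Q2) r c = ((H32 * H12⁻¹ * H13) *ᵥ fun r => Q3 r c) r := by
        intro r
        rw [hm2]
        simp [Matrix.mul_apply, Matrix.mulVec, dotProduct]
      have hQ1col : ∀ r, (H31 * Q1) r c = ((H31 * H21⁻¹ * H23) *ᵥ fun r => Q3 r c) r := by
        intro r
        rw [hm1]
        simp [Matrix.mul_apply, Matrix.mulVec, dotProduct]
      rw [Matrix.mul_diagonal, hQ2col, hQ1col, happ]
      simp [mul_comm, hlam]
    rw [key]; exact bound _ _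
end

section
/- Let R̃ be an M×M Hermitian positive semidefinite complex matrix and let v ∈ ℂ^M be a vector that does not lie in the range (column space) of R̃. Then for every t > 0 the matrix R̃ + t·I is positive definite (hence invertible), and the real quadratic form vᴴ(R̃ + t·I)⁻¹v tends to +∞ as t → 0⁺. -/
open Matrix Filter
open scoped ComplexOrder

/-- Core of Lemma 1 of the FIA paper: if `v` is not in the range of the positive
semidefinite interference covariance `R̃`, then `R̃ + tI` is positive definite for all
`t > 0` and the distance metric `vᴴ(R̃ + tI)⁻¹v` diverges to `+∞` as `t → 0⁺`. -/
theorem quadratic_form_inv_tendsto_atTop {M : ℕ}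
    (R : Matrix (Fin M) (Fin M) ℂ) (hR : R.PosSemidef)
    (v : Fin M → ℂ) (hv : v ∉ LinearMap.range R.mulVecLin) :
    (∀ t : ℝ, 0 < t → (R + (t : ℂ) • (1 : Matrix (Fin M) (Fin M) ℂ)).PosDef) ∧
    Tendsto (fun t : ℝ => (star v ⬝ᵥ ((R + (t : ℂ) • 1)⁻¹ *ᵥ v)).re)
      (nhdsWithin 0 (Set.Ioi 0)) atTop := by
  classical
  have hPD : ∀ t : ℝ, 0 < t → (R + (t : ℂ) • (1 : Matrix (Fin M) (Fin M) ℂ)).PosDef := by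
    intro t ht
    have hsm : ((t : ℂ) • (1 : Matrix (Fin M) (Fin M) ℂ)).PosDef := by
      refine Matrix.PosDef.of_dotProduct_mulVec_pos ?_ (fun x hx => ?_)
      · simp [Matrix.IsHermitian, conjTranspose_smul, Complex.star_def, Complex.conj_ofReal]
      · rw [smul_mulVec, one_mulVec, dotProduct_smul, smul_eq_mul]
        have h1 : (0:ℂ) < (t:ℂ) := by exact_mod_cast ht
        exact mul_pos h1 (dotProduct_star_self_pos_iff.mpr hx)
    exact Matrix.PosDef.posSemidef_add hR hsm
  refine ⟨hPD, ?_⟩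
  -- orthogonal decomposition of v
  let S : Submodule ℂ (EuclideanSpace ℂ (Fin M)) :=
    (LinearMap.range R.mulVecLin).comap (WithLp.linearEquiv 2 ℂ (Fin M → ℂ)).toLinearMap
  obtain ⟨y0, hy, w0, hw, hvyw⟩ := S.exists_add_mem_mem_orthogonal (WithLp.toLp 2 v)
  let y : Fin M → ℂ := y0.ofLp
  let w : Fin M → ℂ := w0.ofLp
  have hv' : v = y + w := congrArg WithLp.ofLp hvyw
  have hw0 : w ≠ 0 := by
    intro hw0'
    refine hv ?_
    have : v = y := by rw [hv', hw0']; simp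
    rw [this]; exact hy
  -- w is in the kernel of R
  have hRwS : WithLp.toLp 2 (R *ᵥ w) ∈ S := ⟨w, rfl⟩
  have hww : WithLp.toLp 2 w = w0 := rfl
  have hyy : WithLp.toLp 2 y = y0 := rfl
  have h1 : star (R *ᵥ w) ⬝ᵥ w = 0 := by
    have := Submodule.inner_right_of_mem_orthogonal hRwS (hww ▸ hw)
    simpa [PiLp.inner_apply, RCLike.inner_apply, dotProduct, mul_comm] using this
  have hRw : R *ᵥ w = 0 := by
    refine (hR.dotProduct_mulVec_zero_iff w).mp ?_
    have := congrArg star h1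
    rwa [star_dotProduct, star_star, star_zero] at this
  -- the two inner product orthogonality facts as dot products
  have hyw : star y ⬝ᵥ w = 0 := by
    have := Submodule.inner_right_of_mem_orthogonal (hyy ▸ hy) (hww ▸ hw)
    simpa [PiLp.inner_apply, RCLike.inner_apply, dotProduct, mul_comm] using this
  have hwy : star w ⬝ᵥ y = 0 := by
    have := congrArg star hyw
    rwa [star_dotProduct, star_star, star_zero] at this
  set c := (star w ⬝ᵥ w).re with hc
  have hwpos : (0:ℂ) < star w ⬝ᵥ w := dotProduct_star_self_pos_iff.mpr hw0
  have hcpos : 0 < c := by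
    have := (Complex.lt_def.mp hwpos).1
    simpa using this
  have hwim : (star w ⬝ᵥ w).im = 0 := by
    have := (Complex.lt_def.mp hwpos).2
    simpa using this.symm
  have key : ∀ t : ℝ, 0 < t →
      (star v ⬝ᵥ ((R + (t:ℂ) • 1)⁻¹ *ᵥ v)).re
        = (star y ⬝ᵥ ((R + (t:ℂ) • 1)⁻¹ *ᵥ y)).re + t⁻¹ * c := by
    intro t ht
    have ht' : (t:ℂ) ≠ 0 := by exact_mod_cast ht.ne'
    set A := R + (t:ℂ) • (1 : Matrix (Fin M) (Fin M) ℂ) with hAdef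
    have hA : A.PosDef := hPD t ht
    have hAw : A *ᵥ w = (t:ℂ) • w := by
      rw [hAdef, add_mulVec, hRw, zero_add, smul_mulVec, one_mulVec]
    have hinvA : A⁻¹ * A = 1 := nonsing_inv_mul A hA.det_pos.ne'.isUnit
    have hBw : A⁻¹ *ᵥ w = (t:ℂ)⁻¹ • w := by
      calc A⁻¹ *ᵥ w = A⁻¹ *ᵥ (A *ᵥ ((t:ℂ)⁻¹ • w)) := by
              rw [mulVec_smul, hAw, smul_smul, inv_mul_cancel₀ ht', one_smul]
        _ = (A⁻¹ * A) *ᵥ ((t:ℂ)⁻¹ • w) := by rw [mulVec_mulVec]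
        _ = (t:ℂ)⁻¹ • w := by rw [hinvA, one_mulVec]
    have hBH : A⁻¹.IsHermitian := hA.isHermitian.inv
    have hcross : star w ⬝ᵥ (A⁻¹ *ᵥ y) = 0 := by
      rw [dotProduct_mulVec]
      have : star w ᵥ* A⁻¹ = star (A⁻¹ *ᵥ w) := by
        rw [star_mulVec, hBH.eq]
      rw [this, hBw, star_smul, smul_dotProduct, hwy, smul_zero]
    have expand : star v ⬝ᵥ (A⁻¹ *ᵥ v)
        = star y ⬝ᵥ (A⁻¹ *ᵥ y) + (t:ℂ)⁻¹ * (star w ⬝ᵥ w) := by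
      rw [hv']
      rw [show star (y + w) = star y + star w from star_add y w, mulVec_add, hBw]
      simp only [dotProduct_add, add_dotProduct, dotProduct_smul, hyw, hwy, hcross,
        smul_eq_mul, mul_zero, add_zero, zero_add, smul_zero]
    rw [expand, Complex.add_re]
    congr 1
    have : ((t:ℂ))⁻¹ = ((t⁻¹ : ℝ) : ℂ) := by push_cast; ring
    rw [this, Complex.re_ofReal_mul]
  have hlow : ∀ᶠ (t : ℝ) in nhdsWithin (0:ℝ) (Set.Ioi 0),
      t⁻¹ * c ≤ (star v ⬝ᵥ ((R + (t:ℂ) • 1)⁻¹ *ᵥ v)).re := by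
    filter_upwards [self_mem_nhdsWithin] with t ht
    rw [key t ht]
    have h0 : 0 ≤ (star y ⬝ᵥ ((R + (t:ℂ) • 1)⁻¹ *ᵥ y)).re := by
      have := ((hPD t ht).inv.posSemidef).dotProduct_mulVec_nonneg y
      have := (Complex.le_def.mp this).1
      simpa using this
    linarith
  exact tendsto_atTop_mono' _ hlow (tendsto_inv_nhdsGT_zero.atTop_mul_const hcpos)
end

section
/- Define the Gaussian tail function Q(x) = ∫ₓ^∞ (1/√(2π)) e^{−u²/2} du. Let R̃ be an M×M Hermitian positive semidefinite complex matrix and let v₁, …, v_P ∈ ℂ^M be finitely many vectors, each of which does not lie in the range (column space) of R̃. Then Σ_{p=1}^P Q(√(v_pᴴ(R̃ + σ²·I)⁻¹v_p)) → 0 as σ² → 0⁺. -/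
open Matrix Filter
open scoped ComplexOrder

/-- The Gaussian tail function `Q(x) = ∫ₓ^∞ (1/√(2π)) e^(−u²/2) du`. -/
noncomputable def gaussQ (x : ℝ) : ℝ :=
  ∫ u in Set.Ioi x, (Real.sqrt (2 * Real.pi))⁻¹ * Real.exp (-(u ^ 2) / 2)

lemma gaussQ_tendsto_zero : Tendsto gaussQ atTop (nhds 0) := by
  have hf : MeasureTheory.Integrable
      (fun u : ℝ => (Real.sqrt (2 * Real.pi))⁻¹ * Real.exp (-(u ^ 2) / 2)) := by
    have h := (integrable_exp_neg_mul_sq (by norm_num : (0:ℝ) < 1/2)).const_mul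
      (Real.sqrt (2 * Real.pi))⁻¹
    convert h using 2 with u
    ring_nf
  have h := MeasureTheory.tendsto_setIntegral_of_antitone
    (μ := MeasureTheory.volume) (s := fun x : ℝ => Set.Ioi x)
    (f := fun u : ℝ => (Real.sqrt (2 * Real.pi))⁻¹ * Real.exp (-(u ^ 2) / 2))
    (fun _ => measurableSet_Ioi) (fun a b hab => Set.Ioi_subset_Ioi hab)
    ⟨0, hf.integrableOn⟩
  have hempty : ⋂ x : ℝ, Set.Ioi x = (∅ : Set ℝ) := by
    ext y
    simp only [Set.mem_iInter, Set.mem_Ioi, Set.mem_empty_iff_false, iff_false, not_forall, not_lt]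
    exact ⟨y, le_refl y⟩
  rw [hempty, MeasureTheory.Measure.restrict_empty, MeasureTheory.integral_zero_measure] at h
  exact h

lemma tendsto_sqrt_atTop : Tendsto Real.sqrt atTop atTop := by
  refine tendsto_atTop.2 fun b => ?_
  filter_upwards [eventually_ge_atTop (b ^ 2)] with x hx
  calc b ≤ Real.sqrt (b ^ 2) := by
        rcases le_total 0 b with hb | hb
        · rw [Real.sqrt_sq hb]
        · exact hb.trans (Real.sqrt_nonneg _)
    _ ≤ Real.sqrt x := Real.sqrt_le_sqrt hx

/-- For a Hermitian matrix, a vector not in the range pairs nontrivially with the kernel. -/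
lemma exists_kernel_witness {m : ℕ} {R : Matrix (Fin m) (Fin m) ℂ} (hR : R.IsHermitian)
    {v : Fin m → ℂ} (hv : v ∉ LinearMap.range R.mulVecLin) :
    ∃ w : Fin m → ℂ, R *ᵥ w = 0 ∧ star w ⬝ᵥ v ≠ 0 := by
  by_contra hcon
  push_neg at hcon
  apply hv
  classical
  let e : (Fin m → ℂ) ≃ₗ[ℂ] EuclideanSpace ℂ (Fin m) :=
    (WithLp.linearEquiv 2 ℂ (Fin m → ℂ)).symm
  let T : EuclideanSpace ℂ (Fin m) →ₗ[ℂ] EuclideanSpace ℂ (Fin m) :=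
    e.toLinearMap ∘ₗ R.mulVecLin ∘ₗ e.symm.toLinearMap
  have hT : ∀ x : EuclideanSpace ℂ (Fin m), T x = e (R *ᵥ (e.symm x)) := fun _ => rfl
  set K := LinearMap.ker T with hK
  have hmemK : ∀ x : EuclideanSpace ℂ (Fin m), x ∈ K ↔ R *ᵥ (e.symm x) = 0 := by
    intro x
    rw [hK, LinearMap.mem_ker, hT]
    constructor
    · intro h
      have := congrArg e.symm h
      simpa using this
    · intro h; rw [h]; simp
  have hinner : ∀ (u y : EuclideanSpace ℂ (Fin m)),
      (inner ℂ u y : ℂ) = star (e.symm u) ⬝ᵥ (e.symm y) := by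
    intro u y
    rw [PiLp.inner_apply]
    refine Finset.sum_congr rfl fun i _ => ?_
    rw [RCLike.inner_apply']
    rfl
  have hle : LinearMap.range T ≤ Kᗮ := by
    rintro _ ⟨y, rfl⟩
    rw [Submodule.mem_orthogonal]
    intro u hu
    rw [hinner, hT]
    have hu0 : R *ᵥ (e.symm u) = 0 := (hmemK u).mp hu
    have he : e.symm (e (R *ᵥ e.symm y)) = R *ᵥ e.symm y := by simp
    rw [he, Matrix.dotProduct_mulVec]
    have hvm : star (e.symm u) ᵥ* R = 0 := by
      have h2 := congrArg star hu0
      rw [Matrix.star_mulVec, hR.eq] at h2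
      simpa using h2
    rw [hvm, zero_dotProduct]
  have hdim : Module.finrank ℂ (LinearMap.range T) = Module.finrank ℂ Kᗮ := by
    have h1 : Module.finrank ℂ (LinearMap.range T) + Module.finrank ℂ K =
        Module.finrank ℂ (EuclideanSpace ℂ (Fin m)) :=
      LinearMap.finrank_range_add_finrank_ker T
    have h2 := Submodule.finrank_add_finrank_orthogonal K
    have h3 : Module.finrank ℂ (LinearMap.range T) + Module.finrank ℂ K =
        Module.finrank ℂ Kᗮ + Module.finrank ℂ K := by
      rw [h1, ← h2, Nat.add_comm]
    exact Nat.add_right_cancel h3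
  have heq : LinearMap.range T = Kᗮ := Submodule.eq_of_le_of_finrank_eq hle hdim
  have hvK : e v ∈ Kᗮ := by
    rw [Submodule.mem_orthogonal]
    intro u hu
    rw [hinner]
    have he : e.symm (e v) = v := by simp
    rw [he]
    exact hcon (e.symm u) ((hmemK u).mp hu)
  rw [← heq] at hvK
  obtain ⟨y, hy⟩ := hvK
  refine ⟨e.symm y, ?_⟩
  have h4 := congrArg e.symm hy
  rw [hT] at h4
  simpa using h4

/-- Cauchy–Schwarz inequality for the inner product induced by a positive definite matrix. -/
lemma posDef_cauchy_schwarz {m : ℕ} {B : Matrix (Fin m) (Fin m) ℂ} (hB : B.PosDef)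
    (x y : Fin m → ℂ) :
    ‖star x ⬝ᵥ (B *ᵥ y)‖ * ‖star y ⬝ᵥ (B *ᵥ x)‖ ≤
      (star x ⬝ᵥ (B *ᵥ x)).re * (star y ⬝ᵥ (B *ᵥ y)).re := by
  let c : PreInnerProductSpace.Core ℂ (Fin m → ℂ) :=
    { inner := fun a b => star a ⬝ᵥ (B *ᵥ b)
      conj_inner_symm := fun a b => by
        show (starRingEnd ℂ) (star b ⬝ᵥ (B *ᵥ a)) = star a ⬝ᵥ (B *ᵥ b)
        rw [star_dotProduct, starRingEnd_apply, star_star, star_mulVec, dotProduct_mulVec,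
          hB.isHermitian.eq]
      re_inner_nonneg := fun a => hB.posSemidef.re_dotProduct_nonneg a
      add_left := by simp only [star_add, add_dotProduct, forall_const, implies_true]
      smul_left := fun a b r => by
        show star (r • a) ⬝ᵥ (B *ᵥ b) = (starRingEnd ℂ) r * (star a ⬝ᵥ (B *ᵥ b))
        rw [← smul_eq_mul, ← smul_dotProduct, starRingEnd_apply, ← star_smul] }
  exact @InnerProductSpace.Core.inner_mul_inner_self_le ℂ (Fin m → ℂ) _ _ _ c x y

/-- Lemma 1 of the FIA paper: the union upper bound on the error probability of the
minimum-distance detector vanishes as the noise variance `σ² → 0⁺`, whenever none of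
the received error-vector directions `v_p` lies in the range (column space) of the
positive semidefinite interference covariance `R̃`. -/
theorem union_bound_tendsto_zero {M P : ℕ}
    (R : Matrix (Fin M) (Fin M) ℂ) (hR : R.PosSemidef)
    (v : Fin P → Fin M → ℂ) (hv : ∀ p, v p ∉ LinearMap.range R.mulVecLin) :
    Tendsto
      (fun s : ℝ => ∑ p : Fin P,
        gaussQ (Real.sqrt ((star (v p) ⬝ᵥ ((R + (s : ℂ) • 1)⁻¹ *ᵥ (v p))).re)))
      (nhdsWithin 0 (Set.Ioi 0)) (nhds 0) := by
  classical
  have key : ∀ p : Fin P,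
      Tendsto (fun s : ℝ =>
        gaussQ (Real.sqrt ((star (v p) ⬝ᵥ ((R + (s : ℂ) • 1)⁻¹ *ᵥ (v p))).re)))
        (nhdsWithin 0 (Set.Ioi 0)) (nhds 0) := by
    intro p
    obtain ⟨w, hw0, hwv⟩ := exists_kernel_witness hR.isHermitian (hv p)
    have hwne : w ≠ 0 := fun h => hwv (by rw [h]; simp)
    have hc0 : 0 < (star w ⬝ᵥ w).re := by
      have h1 : (1 : Matrix (Fin M) (Fin M) ℂ).PosDef := Matrix.PosDef.one
      have := h1.re_dotProduct_pos hwne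
      simpa using this
    set c0 : ℝ := (star w ⬝ᵥ w).re with hc0def
    set d : ℂ := star w ⬝ᵥ v p with hd
    -- quadratic form lower bound
    have hqb : ∀ s : ℝ, 0 < s →
        ‖d‖ ^ 2 / (c0 * s) ≤ (star (v p) ⬝ᵥ ((R + (s : ℂ) • 1)⁻¹ *ᵥ (v p))).re := by
      intro s hs
      set B : Matrix (Fin M) (Fin M) ℂ := R + (s : ℂ) • 1 with hBdef
      have hBpd : B.PosDef := by
        refine Matrix.PosDef.posSemidef_add hR ?_
        rw [Matrix.smul_one_eq_diagonal]
        refine Matrix.posDef_diagonal_iff.mpr fun i => ?_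
        exact_mod_cast hs
      have hdet : IsUnit B.det := (hBpd.det_pos.ne').isUnit
      have hBBinv : B * B⁻¹ = 1 := Matrix.mul_nonsing_inv B hdet
      set x : Fin M → ℂ := B⁻¹ *ᵥ v p with hx
      have hBx : B *ᵥ x = v p := by
        rw [hx, Matrix.mulVec_mulVec, hBBinv, Matrix.one_mulVec]
      have hBw : B *ᵥ w = (s : ℂ) • w := by
        rw [hBdef, Matrix.add_mulVec, hw0, Matrix.smul_mulVec, Matrix.one_mulVec, zero_add]
      have hww : (star w ⬝ᵥ (B *ᵥ w)).re = s * c0 := by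
        rw [hBw, dotProduct_smul]
        simp [hc0def, smul_eq_mul]
      have hxx : (star x ⬝ᵥ v p).re = (star (v p) ⬝ᵥ x).re := by
        rw [show star (v p) ⬝ᵥ x = star (star x ⬝ᵥ v p) from Matrix.star_dotProduct _ _]
        simp [Complex.star_def]
      have hsw : star (B *ᵥ w) = star w ᵥ* B := by
        rw [Matrix.star_mulVec, hBpd.isHermitian.eq]
      have hnorm : ‖star x ⬝ᵥ (B *ᵥ w)‖ = ‖d‖ := by
        have h5 : star x ⬝ᵥ (B *ᵥ w) = star ((star w ᵥ* B) ⬝ᵥ x) := by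
          rw [Matrix.star_dotProduct, hsw]
        rw [h5, ← Matrix.dotProduct_mulVec, hBx] at *
        rw [norm_star]
      have hCS := posDef_cauchy_schwarz hBpd w x
      rw [hBx] at hCS
      rw [hnorm, ← hd, hww, hxx] at hCS
      have hsc : 0 < c0 * s := mul_pos hc0 hs
      rw [div_le_iff₀ hsc]
      calc ‖d‖ ^ 2 = ‖d‖ * ‖d‖ := sq ‖d‖
        _ ≤ s * c0 * (star (v p) ⬝ᵥ x).re := hCS
        _ = (star (v p) ⬝ᵥ x).re * (c0 * s) := by ring
    have hdpos : 0 < ‖d‖ ^ 2 / c0 := div_pos (pow_pos (norm_pos_iff.mpr hwv) 2) hc0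
    have htop : Tendsto
        (fun s : ℝ => (star (v p) ⬝ᵥ ((R + (s : ℂ) • 1)⁻¹ *ᵥ (v p))).re)
        (nhdsWithin 0 (Set.Ioi 0)) atTop := by
      refine tendsto_atTop_mono' _ ?_
        (Tendsto.const_mul_atTop hdpos tendsto_inv_nhdsGT_zero)
      filter_upwards [self_mem_nhdsWithin] with s hs
      have h6 := hqb s hs
      calc ‖d‖ ^ 2 / c0 * s⁻¹ = ‖d‖ ^ 2 / c0 / s := (div_eq_mul_inv _ _).symm
        _ = ‖d‖ ^ 2 / (c0 * s) := by rw [div_div]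
        _ ≤ _ := h6
    have hsqrt : Tendsto
        (fun s : ℝ => Real.sqrt ((star (v p) ⬝ᵥ ((R + (s : ℂ) • 1)⁻¹ *ᵥ (v p))).re))
        (nhdsWithin 0 (Set.Ioi 0)) atTop := tendsto_sqrt_atTop.comp htop
    exact gaussQ_tendsto_zero.comp hsqrt
  have hsum := tendsto_finset_sum (Finset.univ : Finset (Fin P)) (fun p _ => key p)
  simpa using hsum
end

section
/- Let M ≥ 2 and let H_{i,j} for i, j ∈ {1,2,3} with i ≠ j be invertible M×M complex matrices. Set T = H₂₃⁻¹H₂₁H₃₁⁻¹H₃₂H₁₂⁻¹H₁₃, let w ∈ ℂ^M, and define A = [Tw | ⋯ | T^{M−2}w], B = [Tw | ⋯ | T^{M−1}w], C = [w | ⋯ | T^{M−2}w], and the precoders Q₃ = A, Q₁ = H₂₁⁻¹H₂₃B, Q₂ = H₁₂⁻¹H₁₃C. Then H₃₁Q₁ = H₃₂Q₂ as matrices, and the interference at each of the three receivers occupies at most M−1 dimensions: rank[H₁₂Q₂ | H₁₃Q₃] ≤ M−1, rank[H₂₁Q₁ | H₂₃Q₃] ≤ M−1, and rank[H₃₁Q₁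 | H₃₂Q₂] ≤ M−1. -/
open Matrix

/-- Alignment part of Theorem 3 of the FIA paper (3-user SISO IC with symbol extension
`M`): with the Krylov precoders `Q₃ = [Tw|⋯|T^{M−2}w]`, `Q₁ = H₂₁⁻¹H₂₃[Tw|⋯|T^{M−1}w]`,
`Q₂ = H₁₂⁻¹H₁₃[w|⋯|T^{M−2}w]`, one has `H₃₁Q₁ = H₃₂Q₂` and the interference at each
receiver occupies at most `M−1` dimensions. -/
theorem fia_3user_siso_alignment {M : ℕ} (hM : 2 ≤ M)
    (H12 H13 H21 H23 H31 H32 : Matrix (Fin M) (Fin M) ℂ)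
    (h12 : IsUnit H12) (h13 : IsUnit H13) (h21 : IsUnit H21)
    (h23 : IsUnit H23) (h31 : IsUnit H31) (h32 : IsUnit H32)
    (w : Fin M → ℂ) :
    let T := H23⁻¹ * H21 * H31⁻¹ * H32 * H12⁻¹ * H13
    let A : Matrix (Fin M) (Fin (M - 2)) ℂ :=
      Matrix.of fun r c => (T ^ ((c : ℕ) + 1) *ᵥ w) r
    let B : Matrix (Fin M) (Fin (M - 1)) ℂ :=
      Matrix.of fun r c => (T ^ ((c : ℕ) + 1) *ᵥ w) r
    let Cm : Matrix (Fin M) (Fin (M - 1)) ℂ :=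
      Matrix.of fun r c => (T ^ (c : ℕ) *ᵥ w) r
    let Q3 := A
    let Q1 := H21⁻¹ * H23 * B
    let Q2 := H12⁻¹ * H13 * Cm
    H31 * Q1 = H32 * Q2 ∧
    (fromCols (H12 * Q2) (H13 * Q3)).rank ≤ M - 1 ∧
    (fromCols (H21 * Q1) (H23 * Q3)).rank ≤ M - 1 ∧
    (fromCols (H31 * Q1) (H32 * Q2)).rank ≤ M - 1 := by
  intro T A B Cm Q3 Q1 Q2
  have d12 : IsUnit H12.det := (Matrix.isUnit_iff_isUnit_det _).mp h12
  have d21 : IsUnit H21.det := (Matrix.isUnit_iff_isUnit_det _).mp h21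
  have d23 : IsUnit H23.det := (Matrix.isUnit_iff_isUnit_det _).mp h23
  have d31 : IsUnit H31.det := (Matrix.isUnit_iff_isUnit_det _).mp h31
  -- T * Cm = B
  have hTCm : T * Cm = B := by
    ext r c
    show (T * Cm) r c = (T ^ ((c : ℕ) + 1) *ᵥ w) r
    have : (T * Cm) r c = (T *ᵥ (T ^ (c : ℕ) *ᵥ w)) r := by
      simp [Matrix.mul_apply, Matrix.mulVec, dotProduct, Cm]
    rw [this, Matrix.mulVec_mulVec, ← pow_succ']
  -- key identity : H32 * H12⁻¹ * H13 = H31 * H21⁻¹ * H23 * T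
  have hkey : H31 * (H21⁻¹ * (H23 * T)) = H32 * (H12⁻¹ * H13) := by
    show H31 * (H21⁻¹ * (H23 * (H23⁻¹ * H21 * H31⁻¹ * H32 * H12⁻¹ * H13))) = _
    rw [show H23⁻¹ * H21 * H31⁻¹ * H32 * H12⁻¹ * H13
        = H23⁻¹ * (H21 * (H31⁻¹ * (H32 * (H12⁻¹ * H13)))) by
          simp [Matrix.mul_assoc],
      ← Matrix.mul_assoc H23, Matrix.mul_nonsing_inv _ d23, Matrix.one_mul,
      ← Matrix.mul_assoc H21⁻¹, Matrix.nonsing_inv_mul _ d21, Matrix.one_mul,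
      ← Matrix.mul_assoc H31, Matrix.mul_nonsing_inv _ d31, Matrix.one_mul]
  have hQ1 : H21 * Q1 = H23 * B := by
    show H21 * (H21⁻¹ * H23 * B) = _
    rw [← Matrix.mul_assoc, ← Matrix.mul_assoc, Matrix.mul_nonsing_inv _ d21,
      Matrix.one_mul]
  have hQ2 : H12 * Q2 = H13 * Cm := by
    show H12 * (H12⁻¹ * H13 * Cm) = _
    rw [← Matrix.mul_assoc, ← Matrix.mul_assoc, Matrix.mul_nonsing_inv _ d12,
      Matrix.one_mul]
  have halign : H31 * Q1 = H32 * Q2 := by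
    show H31 * (H21⁻¹ * H23 * B) = H32 * (H12⁻¹ * H13 * Cm)
    calc H31 * (H21⁻¹ * H23 * B) = H31 * (H21⁻¹ * (H23 * T)) * Cm := by
          rw [← hTCm]; simp [Matrix.mul_assoc]
      _ = H32 * (H12⁻¹ * H13 * Cm) := by
          rw [hkey]; simp [Matrix.mul_assoc]
  refine ⟨halign, ?_, ?_, ?_⟩
  · -- receiver 1
    set S : Matrix (Fin (M-1)) (Fin (M-2)) ℂ :=
      Matrix.of fun i j => if i = ⟨(j : ℕ) + 1, by omega⟩ then (1 : ℂ) else 0 with hS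
    have hA : A = Cm * S := by
      ext r j
      simp [Matrix.mul_apply, mul_ite, hS, A, Cm]
    have e : (H13 * Cm) * fromCols 1 S = fromCols (H12 * Q2) (H13 * Q3) := by
      have h3 : H13 * Q3 = (H13 * Cm) * S := by
        show H13 * A = _
        rw [hA, Matrix.mul_assoc]
      rw [Matrix.mul_fromCols, Matrix.mul_one, hQ2, h3]
    rw [← e]
    calc ((H13 * Cm) * _).rank ≤ (H13 * Cm).rank := Matrix.rank_mul_le_left _ _
      _ ≤ Fintype.card (Fin (M - 1)) := Matrix.rank_le_card_width _
      _ = M - 1 := Fintype.card_fin _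
  · -- receiver 2
    set S : Matrix (Fin (M-1)) (Fin (M-2)) ℂ :=
      Matrix.of fun i j => if i = ⟨(j : ℕ), by omega⟩ then (1 : ℂ) else 0 with hS
    have hA : A = B * S := by
      ext r j
      simp [Matrix.mul_apply, mul_ite, hS, A, B]
    have e : (H23 * B) * fromCols 1 S = fromCols (H21 * Q1) (H23 * Q3) := by
      have h3 : H23 * Q3 = (H23 * B) * S := by
        show H23 * A = _
        rw [hA, Matrix.mul_assoc]
      rw [Matrix.mul_fromCols, Matrix.mul_one, hQ1, h3]
    rw [← e]
    calc ((H23 * B) * _).rank ≤ (H23 * B).rank := Matrix.rank_mul_le_left _ _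
      _ ≤ Fintype.card (Fin (M - 1)) := Matrix.rank_le_card_width _
      _ = M - 1 := Fintype.card_fin _
  · -- receiver 3
    have e : (H31 * Q1) * fromCols (1 : Matrix (Fin (M-1)) (Fin (M-1)) ℂ) 1
        = fromCols (H31 * Q1) (H32 * Q2) := by
      rw [Matrix.mul_fromCols, Matrix.mul_one, halign]
    rw [← e]
    calc ((H31 * Q1) * _).rank ≤ (H31 * Q1).rank := Matrix.rank_mul_le_left _ _
      _ ≤ Fintype.card (Fin (M - 1)) := Matrix.rank_le_card_width _
      _ = M - 1 := Fintype.card_fin _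
end
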